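/- A matrix space S ≤ M(n, F) spanned by rank-1 matrices is nilpotent (some k with every product of k elements of S equal to 0) if and only if it is nil (every single element is nilpotent). -/

import Mathlib

open Matrix

section Aux
variable {F : Type*} [Field F] {n : ℕ}

lemma vmv_mul (x y z w : Fin n → F) :
    vecMulVec x y * vecMulVec z w = (y ⬝ᵥ z) • vecMulVec x w := by
  ext i j
  simp only [mul_apply, vecMulVec_apply, Matrix.smul_apply, smul_eq_mul, dotProduct,
    Finset.sum_mul]
  exact Finset.sum_congr rfl fun k _ => by ring

end Aux

section Walk
variable {F : Type*} [Field F] {n m : ℕ} (u v : Fin m → Fin n → F)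

lemma prod_formula (g : ℕ → Fin m) (r : ℕ) :
    (List.ofFn (fun i : Fin (r+1) => vecMulVec (u (g i)) (v (g i)))).prod
      = (∏ i ∈ Finset.range r, (v (g i) ⬝ᵥ u (g (i+1)))) • vecMulVec (u (g 0)) (v (g r)) := by
  induction r generalizing g with
  | zero => simp [List.ofFn_succ]
  | succ r ih =>
    rw [List.ofFn_succ, List.prod_cons]
    have h2 : (List.ofFn fun i : Fin (r+1) => vecMulVec (u (g (i.succ))) (v (g i.succ)))
        = List.ofFn fun i : Fin (r+1) =>
            vecMulVec (u ((fun t => g (t+1)) i)) (v ((fun t => g (t+1)) i)) := by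
      congr 1
    rw [h2, ih (fun t => g (t+1))]
    rw [mul_smul_comm, vmv_mul, smul_smul]
    have h3 : ∏ i ∈ Finset.range (r+1), (v (g i) ⬝ᵥ u (g (i+1)))
        = (∏ i ∈ Finset.range r, (v (g (i+1)) ⬝ᵥ u (g (i+1+1)))) * (v (g 0) ⬝ᵥ u (g 1)) := by
      rw [Finset.prod_range_succ']
    rw [h3]
    norm_num

end Walk

section Walk2
variable {F : Type*} [Field F] {n m : ℕ} (u v : Fin m → Fin n → F)

lemma vmv_ne_zero {x y : Fin n → F} (hx : x ≠ 0) (hy : y ≠ 0) :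
    vecMulVec x y ≠ 0 := by
  obtain ⟨i, hi⟩ := Function.ne_iff.1 hx
  obtain ⟨j, hj⟩ := Function.ne_iff.1 hy
  intro h
  have := congrFun (congrFun h i) j
  simp only [vecMulVec_apply, Matrix.zero_apply] at this
  exact (mul_ne_zero hi hj) this

lemma periodic_mod {α : Type*} {k : ℕ} (hk : 0 < k) {j : ℕ → α}
    (hper : ∀ i, j (i + k) = j i) : ∀ i, j i = j (i % k) := by
  intro i
  induction i using Nat.strong_induction_on with
  | _ i ih =>
    rcases lt_or_ge i k with h | h
    · rw [Nat.mod_eq_of_lt h]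
    · have h1 : j i = j (i - k) := by
        conv_lhs => rw [show i = (i - k) + k by omega]
        rw [hper]
      rw [h1, ih (i - k) (by omega), Nat.mod_eq_sub_mod h]

lemma no_walk (hu : ∀ i, u i ≠ 0) (hv : ∀ i, v i ≠ 0)
    (hnil : ∀ B : Matrix (Fin n) (Fin n) F,
      B ∈ Submodule.span F (Set.range fun i => vecMulVec (u i) (v i)) → IsNilpotent B) :
    ¬ ∃ (k : ℕ) (j : ℕ → Fin m), 0 < k ∧ (∀ i, j (i + k) = j i) ∧
        ∀ i, v (j i) ⬝ᵥ u (j (i + 1)) ≠ 0 := by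
  intro hex
  classical
  have hexP : ∃ k : ℕ, ∃ j : ℕ → Fin m, 0 < k ∧ (∀ i, j (i + k) = j i) ∧
      ∀ i, v (j i) ⬝ᵥ u (j (i + 1)) ≠ 0 := hex
  obtain ⟨j, hk, hper, hedge⟩ := Nat.find_spec hexP
  set k := Nat.find hexP with hkdef
  have hmin : ∀ k' < k, ¬ ∃ j : ℕ → Fin m, 0 < k' ∧ (∀ i, j (i + k') = j i) ∧
      ∀ i, v (j i) ⬝ᵥ u (j (i + 1)) ≠ 0 := fun k' h => Nat.find_min hexP h
  have hj : ∀ i, j i = j (i % k) := periodic_mod hk hper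
  -- chord condition
  have hchord : ∀ s r : ℕ, v (j s) ⬝ᵥ u (j r) ≠ 0 → r % k = (s + 1) % k := by
    intro s r hne
    by_contra hmod
    have hs'k : s % k < k := Nat.mod_lt _ hk
    have hr'k : r % k < k := Nat.mod_lt _ hk
    set s' := s % k with hs'
    set r' := r % k with hr'
    set d := (s' + k - r') % k with hd
    have e2 : r' + d ≡ s' [MOD k] := by
      calc r' + d ≡ r' + (s' + k - r') [MOD k] := ((Nat.mod_modEq _ _)).add_left r'
      _ = s' + k := by omega
      _ ≡ s' + 0 [MOD k] := (Nat.modEq_zero_iff_dvd.2 dvd_rfl).add_left s'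
      _ = s' := by omega
    have hrd : (r' + d) % k = s' := by
      have h4 : (r' + d) % k = s' % k := e2
      rwa [Nat.mod_eq_of_lt hs'k] at h4
    have hdlt : d < k := Nat.mod_lt _ hk
    have hdne : d ≠ k - 1 := by
      intro hdk
      apply hmod
      have h5 : (r' + (d + 1)) % k = (s' + 1) % k := e2.add_right 1
      rw [show r' + (d + 1) = r' + k by omega, Nat.add_mod_right,
        Nat.mod_eq_of_lt hr'k] at h5
      have h6 : (s + 1) % k = (s' + 1) % k := (Nat.mod_modEq s k).symm.add_right 1
      rw [h6]; exact h5
    -- shorter walk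
    have hkpos' : 0 < d + 1 := Nat.succ_pos d
    refine hmin (d + 1) (by omega) ⟨fun i => j (r' + i % (d + 1)), hkpos', fun i => by
        show j (r' + (i + (d + 1)) % (d + 1)) = _
        rw [Nat.add_mod_right], ?_⟩
    intro i
    show v (j (r' + i % (d + 1))) ⬝ᵥ u (j (r' + (i + 1) % (d + 1))) ≠ 0
    have he : i % (d + 1) < d + 1 := Nat.mod_lt _ hkpos'
    have hstep1 : (i + 1) % (d + 1) = (i % (d + 1) + 1) % (d + 1) :=
      ((Nat.mod_modEq i (d+1)).symm.add_right 1 : _)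
    rcases eq_or_lt_of_le (Nat.succ_le_of_lt he) with hcase | hcase
    · -- i % (d+1) = d
      have he' : i % (d + 1) = d := by omega
      have h7 : (i + 1) % (d + 1) = 0 := by
        rw [hstep1, he', Nat.mod_self]
      rw [he', h7, Nat.add_zero]
      have h8 : j (r' + d) = j s := by
        rw [hj (r' + d), hrd, hs', ← hj s]
      have h9 : j r' = j r := by rw [hr', ← hj r]
      rw [h8, h9]; exact hne
    · -- i % (d+1) < d
      have h7 : (i + 1) % (d + 1) = i % (d + 1) + 1 := by
        rw [hstep1, Nat.mod_eq_of_lt (by omega)]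
      rw [h7, ← Nat.add_assoc]
      exact hedge (r' + i % (d + 1))
  -- the matrix part
  set M : Matrix (Fin n) (Fin n) F :=
    ∑ t ∈ Finset.range k, vecMulVec (u (j t)) (v (j t)) with hM
  have hstep : ∀ t r : ℕ, vecMulVec (u (j t)) (v (j r)) * M
      = (v (j r) ⬝ᵥ u (j (r + 1))) • vecMulVec (u (j t)) (v (j (r + 1))) := by
    intro t r
    rw [hM, Finset.mul_sum]
    rw [Finset.sum_congr rfl fun s _ =>
      (vmv_mul (u (j t)) (v (j r)) (u (j s)) (v (j s)))]
    rw [Finset.sum_eq_single ((r + 1) % k)]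
    · rw [← hj (r + 1)]
    · intro s hs hne2
      have hsk : s % k = s := Nat.mod_eq_of_lt (Finset.mem_range.1 hs)
      have h0 : v (j r) ⬝ᵥ u (j s) = 0 := by
        by_contra h3
        exact hne2 (by rw [← hsk]; exact hchord r s h3)
      rw [h0, zero_smul]
    · intro habs
      exact absurd (Finset.mem_range.2 (Nat.mod_lt _ hk)) habs
  have hpow : ∀ r : ℕ, M ^ (r + 1) = ∑ t ∈ Finset.range k,
      (∏ i ∈ Finset.range r, (v (j (t + i)) ⬝ᵥ u (j (t + i + 1)))) •
        vecMulVec (u (j t)) (v (j (t + r))) := by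
    intro r
    induction r with
    | zero => simp [hM]
    | succ r ih =>
      rw [pow_succ, ih, Finset.sum_mul]
      refine Finset.sum_congr rfl fun t _ => ?_
      rw [smul_mul_assoc, hstep t (t + r), smul_smul, ← Nat.add_assoc,
        Finset.prod_range_succ]
  have hC : (∏ i ∈ Finset.range k, (v (j i) ⬝ᵥ u (j (i + 1)))) ≠ 0 :=
    Finset.prod_ne_zero_iff.2 fun i _ => hedge i
  have hshift : ∀ t : ℕ, (∏ i ∈ Finset.range k, (v (j (t + i)) ⬝ᵥ u (j (t + i + 1))))
      = ∏ i ∈ Finset.range k, (v (j i) ⬝ᵥ u (j (i + 1))) := by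
    intro t
    induction t with
    | zero => simp
    | succ t ih =>
      have h1 : (∏ i ∈ Finset.range (k + 1), (v (j (t + i)) ⬝ᵥ u (j (t + i + 1))))
          = (∏ i ∈ Finset.range k, (v (j (t + 1 + i)) ⬝ᵥ u (j (t + 1 + i + 1)))) *
            (v (j t) ⬝ᵥ u (j (t + 1))) := by
        rw [Finset.prod_range_succ']
        congr 1
        · exact Finset.prod_congr rfl fun i _ => by
            rw [show t + (i + 1) = t + 1 + i from by omega]
      have h2 : (∏ i ∈ Finset.range (k + 1), (v (j (t + i)) ⬝ᵥ u (j (t + i + 1))))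
          = (∏ i ∈ Finset.range k, (v (j (t + i)) ⬝ᵥ u (j (t + i + 1)))) *
            (v (j (t + k)) ⬝ᵥ u (j (t + k + 1))) := Finset.prod_range_succ _ _
      have hck : (v (j (t + k)) ⬝ᵥ u (j (t + k + 1))) = v (j t) ⬝ᵥ u (j (t + 1)) := by
        rw [hper t, show t + k + 1 = (t + 1) + k from by omega, hper (t + 1)]
      have h3 := h1.symm.trans h2
      rw [hck, ih] at h3
      exact mul_right_cancel₀ (hedge t) h3
  have hMk1 : M ^ (k + 1) = (∏ i ∈ Finset.range k, (v (j i) ⬝ᵥ u (j (i + 1)))) • M := by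
    rw [hpow k, hM, Finset.smul_sum]
    refine Finset.sum_congr rfl fun t _ => ?_
    rw [hshift t, hper t]
  have hq : ∀ q : ℕ, M ^ (q * k + 1)
      = (∏ i ∈ Finset.range k, (v (j i) ⬝ᵥ u (j (i + 1)))) ^ q • M := by
    intro q
    induction q with
    | zero => simp
    | succ q ih =>
      rw [show (q + 1) * k + 1 = (q * k + 1) + k from by ring, pow_add, ih,
        smul_mul_assoc, ← pow_succ', hMk1, smul_smul, ← pow_succ]
  have hMmem : M ∈ Submodule.span F (Set.range fun i => vecMulVec (u i) (v i)) :=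
    Submodule.sum_mem _ fun t _ => Submodule.subset_span ⟨j t, rfl⟩
  obtain ⟨N, hN⟩ := hnil M hMmem
  have hNk : M ^ (N * k + 1) = 0 := by
    have hle : N ≤ N * k := Nat.le_mul_of_pos_right N hk
    rw [show N * k + 1 = N + (N * k + 1 - N) from by omega, pow_add, hN, zero_mul]
  have hM0 : M = 0 := by
    have h4 := hq N
    rw [hNk] at h4
    exact (smul_eq_zero.mp h4.symm).resolve_left (pow_ne_zero _ hC)
  have h9 := hstep 0 0
  rw [hM0, mul_zero] at h9
  exact vmv_ne_zero (hu (j 0)) (hv (j 1))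
    ((smul_eq_zero.mp h9.symm).resolve_left (hedge 0))

end Walk2

section Main
variable {F : Type*} [Field F] {n : ℕ}

lemma rank_one_decomp {A : Matrix (Fin n) (Fin n) F} (h : A.rank = 1) :
    ∃ u v : Fin n → F, u ≠ 0 ∧ v ≠ 0 ∧ A = vecMulVec u v := by
  rw [Matrix.rank] at h
  obtain ⟨u₀, hu₀, hspan⟩ := finrank_eq_one_iff'.mp h
  set u : Fin n → F := (u₀ : Fin n → F) with hu_def
  have hu : u ≠ 0 := by
    intro h0
    exact hu₀ (Subtype.ext h0)
  have hmem : ∀ j : Fin n, A.mulVec (Pi.single j 1) ∈ LinearMap.range A.mulVecLin :=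
    fun j => ⟨Pi.single j 1, rfl⟩
  choose v hv using fun j => hspan ⟨A.mulVec (Pi.single j 1), hmem j⟩
  have hcol : ∀ j, v j • u = A.mulVec (Pi.single j 1) := by
    intro j
    have := congrArg (Subtype.val) (hv j)
    simpa using this
  have hAeq : A = vecMulVec u v := by
    ext i j
    have := congrFun (hcol j) i
    simp only [Pi.smul_apply, smul_eq_mul, mulVec_single, op_smul_eq_mul, col_apply, mul_one] at this
    rw [vecMulVec_apply, mul_comm]
    exact this.symm
  refine ⟨u, v, hu, ?_, hAeq⟩
  intro hv0
  rw [hv0] at hAeq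
  have hA0 : A = 0 := by
    rw [hAeq]; ext i j; simp [vecMulVec_apply]
  rw [hA0] at h
  rw [Matrix.mulVecLin_zero, LinearMap.range_zero, finrank_bot] at h
  exact one_ne_zero h.symm

end Main

/-- Mathes–Omladič–Radjavi: a matrix space spanned by rank-1 matrices is nilpotent
(some `k` with every product of `k` elements equal to `0`) iff it is nil (every element
is nilpotent). -/
theorem stmt_9 (F : Type*) [Field F] (n : ℕ)
    (S : Submodule F (Matrix (Fin n) (Fin n) F))
    (T : Set (Matrix (Fin n) (Fin n) F))
    (hT : ∀ A ∈ T, A.rank = 1)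
    (hspan : Submodule.span F T = S) :
    (∃ k : ℕ, ∀ f : Fin k → Matrix (Fin n) (Fin n) F,
        (∀ i, f i ∈ S) → (List.ofFn f).prod = 0) ↔
      (∀ B ∈ S, IsNilpotent B) := by
  constructor
  · rintro ⟨k, hk⟩ B hB
    refine ⟨k, ?_⟩
    have := hk (fun _ => B) (fun _ => hB)
    rwa [List.ofFn_const, List.prod_replicate] at this
  · intro hnil
    classical
    obtain ⟨b, hbT, hbspan, hbli⟩ := exists_linearIndependent F T
    have hbfin : b.Finite := hbli.setFinite
    obtain ⟨m, emb, hrange⟩ := hbfin.fin_embedding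
    have hBmemT : ∀ i : Fin m, (emb i : Matrix (Fin n) (Fin n) F) ∈ T := fun i =>
      hbT (hrange ▸ Set.mem_range_self i)
    choose u v hu hv hA using fun i => rank_one_decomp (hT _ (hBmemT i))
    have hspanB : Submodule.span F (Set.range fun i => vecMulVec (u i) (v i)) = S := by
      rw [show (fun i : Fin m => vecMulVec (u i) (v i)) = fun i => emb i from
        funext fun i => (hA i).symm]
      rw [show Set.range (fun i => emb i) = b from hrange, hbspan, hspan]
    have hnil' : ∀ B : Matrix (Fin n) (Fin n) F,
        B ∈ Submodule.span F (Set.range fun i => vecMulVec (u i) (v i)) → IsNilpotent B := by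
      rw [hspanB]; exact hnil
    have hnw := no_walk u v hu hv hnil'
    refine ⟨m + 1, ?_⟩
    intro f hf
    have hfS : ∀ i, f i ∈ Submodule.span F (Set.range fun i => vecMulVec (u i) (v i)) :=
      fun i => hspanB ▸ hf i
    choose co hco using fun i => (Submodule.mem_span_range_iff_exists_fun F).1 (hfS i)
    have hexp : (List.ofFn f).prod = ∑ g : Fin (m + 1) → Fin m,
        (∏ i, co i (g i)) •
          (List.ofFn fun i : Fin (m + 1) => vecMulVec (u (g i)) (v (g i))).prod := by
      have h1 : f = fun i => ∑ j : Fin m, co i j • vecMulVec (u j) (v j) :=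
        funext fun i => (hco i).symm
      calc (List.ofFn f).prod
          = MultilinearMap.mkPiAlgebraFin F (m + 1) _ f := rfl
        _ = ∑ g : Fin (m + 1) → Fin m, MultilinearMap.mkPiAlgebraFin F (m + 1) _
              (fun i => co i (g i) • vecMulVec (u (g i)) (v (g i))) := by
            rw [h1]
            exact MultilinearMap.map_sum _ _
        _ = ∑ g : Fin (m + 1) → Fin m, (∏ i, co i (g i)) •
              (List.ofFn fun i : Fin (m + 1) => vecMulVec (u (g i)) (v (g i))).prod := by
            refine Finset.sum_congr rfl fun g _ => ?_
            rw [MultilinearMap.map_smul_univ]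
            rfl
    rw [hexp]
    refine Finset.sum_eq_zero fun g _ => ?_
    -- show the single product vanishes
    set g' : ℕ → Fin m := fun t => g ⟨t % (m + 1), Nat.mod_lt _ (Nat.succ_pos m)⟩ with hg'
    have hgg : ∀ i : Fin (m + 1), g i = g' i.val := by
      intro i
      rw [hg']
      congr 1
      exact (Fin.ext (Nat.mod_eq_of_lt i.isLt)).symm
    have hlist : (List.ofFn fun i : Fin (m + 1) => vecMulVec (u (g i)) (v (g i)))
        = List.ofFn fun i : Fin (m + 1) => vecMulVec (u (g' i.val)) (v (g' i.val)) := by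
      congr 1
      funext i
      rw [hgg i]
    rw [hlist, prod_formula u v g' m]
    have hzero : (∏ i ∈ Finset.range m, (v (g' i) ⬝ᵥ u (g' (i + 1)))) = 0 := by
      by_contra hne
      have hedges : ∀ t ∈ Finset.range m, v (g' t) ⬝ᵥ u (g' (t + 1)) ≠ 0 :=
        Finset.prod_ne_zero_iff.1 hne
      obtain ⟨x, y, hxy, hgxy⟩ := Fintype.exists_ne_map_eq_of_card_lt
        (fun i : Fin (m + 1) => g i) (by simp)
      -- wlog x < y
      obtain ⟨x, y, hlt, hgeq⟩ : ∃ x y : Fin (m + 1), x.val < y.val ∧ g x = g y := by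
        rcases hxy.lt_or_gt with h | h
        · exact ⟨x, y, h, hgxy⟩
        · exact ⟨y, x, h, hgxy.symm⟩
      have hk₀ : 0 < y.val - x.val := by omega
      refine hnw ⟨y.val - x.val, fun t => g' (x.val + t % (y.val - x.val)), hk₀, fun t => by
          show g' (x.val + (t + (y.val - x.val)) % (y.val - x.val)) = _
          rw [Nat.add_mod_right], ?_⟩
      intro t
      show v (g' (x.val + t % (y.val - x.val))) ⬝ᵥ
        u (g' (x.val + (t + 1) % (y.val - x.val))) ≠ 0
      set k₀ := y.val - x.val with hk₀def
      have he : t % k₀ < k₀ := Nat.mod_lt _ hk₀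
      have hstep1 : (t + 1) % k₀ = (t % k₀ + 1) % k₀ :=
        ((Nat.mod_modEq t k₀).symm.add_right 1 : _)
      rcases eq_or_lt_of_le (Nat.succ_le_of_lt he) with hcase | hcase
      · -- wrap around
        have h7 : (t + 1) % k₀ = 0 := by rw [hstep1, show t % k₀ + 1 = k₀ from hcase, Nat.mod_self]
        rw [h7]
        simp only [Nat.add_zero]
        have h8 : g' x.val = g' (x.val + k₀) := by
          have hx : g' x.val = g x := (hgg x).symm
          have hy : g' (x.val + k₀) = g y := by
            rw [show x.val + k₀ = y.val from by omega]
            exact (hgg y).symm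
          rw [hx, hy, hgeq]
        rw [h8, show x.val + k₀ = x.val + t % k₀ + 1 from by omega]
        exact hedges _ (Finset.mem_range.2 (by omega))
      · have h7 : (t + 1) % k₀ = t % k₀ + 1 := by
          rw [hstep1, Nat.mod_eq_of_lt (by omega)]
        rw [h7, ← Nat.add_assoc]
        exact hedges _ (Finset.mem_range.2 (by omega))
    rw [hzero, zero_smul, smul_zero]
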